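/- Let π and σ be two projective planes of the same prime order p on sets of points, and suppose they share at least p² + 1 common lines (as point sets). Then π and σ have the same point set and the same set of lines, i.e., π = σ. -/

import Mathlib

open Finset in
theorem dbe_aux {α : Type} [DecidableEq α] (V : Finset α) (F : Finset (Finset α))
    (n : ℕ) (hn : 2 ≤ n) (hV : V.card = n)
    (hcov : ∀ y ∈ V, ∀ z ∈ V, y ≠ z → ∃ m ∈ F, y ∈ m ∧ z ∈ m)
    (hint : ∀ m₁ ∈ F, ∀ m₂ ∈ F, m₁ ≠ m₂ → (m₁ ∩ m₂ ∩ V).card ≤ 1)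
    (hsizen : ∀ m ∈ F, (m ∩ V).card ≤ n - 1)
    (hk : F.card < n) : False := by
  classical
  -- unique line through two points
  have huniq : ∀ m₁ ∈ F, ∀ m₂ ∈ F, ∀ y ∈ V, ∀ z ∈ V, y ≠ z →
      y ∈ m₁ → z ∈ m₁ → y ∈ m₂ → z ∈ m₂ → m₁ = m₂ := by
    intro m₁ hm₁ m₂ hm₂ y hy z hz hyz hy1 hz1 hy2 hz2
    by_contra hne
    have h1 := hint m₁ hm₁ m₂ hm₂ hne
    have := Finset.card_le_one.mp h1 y (by simp [hy, hy1, hy2]) z (by simp [hz, hz1, hz2])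
    exact hyz this
  -- the chosen line through two points
  set f : α → α → Finset α := fun y z =>
    if h : ∃ m ∈ F, y ∈ m ∧ z ∈ m then h.choose else ∅ with hfdef
  have hf : ∀ y ∈ V, ∀ z ∈ V, y ≠ z → f y z ∈ F ∧ y ∈ f y z ∧ z ∈ f y z := by
    intro y hy z hz hyz
    have h := hcov y hy z hz hyz
    simp only [hfdef, dif_pos h]
    exact ⟨h.choose_spec.1, h.choose_spec.2.1, h.choose_spec.2.2⟩
  -- nonemptiness of V \ m
  have hVm : ∀ m ∈ F, (V \ m).Nonempty := by
    intro m hm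
    rw [Finset.sdiff_nonempty]
    intro hsub
    have h1 : (m ∩ V).card = n := by
      rw [Finset.inter_eq_right.mpr hsub, hV]
    have := hsizen m hm
    omega
  -- r_y ≥ a_m for y ∉ m
  have fact_r : ∀ y ∈ V, ∀ m ∈ F, y ∉ m →
      (m ∩ V).card ≤ (F.filter (fun m' => y ∈ m')).card := by
    intro y hy m hm hym
    apply Finset.card_le_card_of_injOn (fun z => f y z)
    · intro z hz
      rw [Finset.mem_coe, Finset.mem_inter] at hz
      have hzy : y ≠ z := fun h => hym (h ▸ hz.1)
      have := hf y hy z hz.2 hzy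
      simp only [Finset.mem_coe, Finset.mem_filter]
      exact ⟨this.1, this.2.1⟩
    · intro z hz z' hz' heq
      simp only [Finset.coe_inter, Set.mem_inter_iff, Finset.mem_coe] at hz hz'
      have heq' : f y z = f y z' := heq
      have hzy : y ≠ z := fun h => hym (h ▸ hz.1)
      have hzy' : y ≠ z' := fun h => hym (h ▸ hz'.1)
      have h1 := hf y hy z hz.2 hzy
      have h2 := hf y hy z' hz'.2 hzy'
      rw [heq'] at h1
      have hne : f y z' ≠ m := fun h => hym (h ▸ h1.2.1)
      have hcard := hint (f y z') h2.1 m hm hne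
      exact Finset.card_le_one.mp hcard z (by simp [h1.2.2, hz.1, hz.2]) z'
        (by simp [h2.2.2, hz'.1, hz'.2])
  -- there is a line not through y, so r y < k
  have fact_rk : ∀ y ∈ V, (F.filter (fun m' => y ∈ m')).card < F.card := by
    intro y hy
    obtain ⟨z, hz, hzy⟩ := Finset.exists_mem_ne (by omega : 1 < V.card) y
    have hm := hf y hy z hz (Ne.symm hzy)
    obtain ⟨w, hw⟩ := hVm (f y z) hm.1
    rw [Finset.mem_sdiff] at hw
    have hwz : z ≠ w := fun h => hw.2 (h ▸ hm.2.2)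
    have hm2 := hf z hz w hw.1 hwz
    have hym2 : y ∉ f z w := by
      intro hy2
      have : f z w = f y z := huniq (f z w) hm2.1 (f y z) hm.1 y hy z hz (Ne.symm hzy)
        hy2 hm2.2.1 hm.2.1 hm.2.2
      exact hw.2 (this ▸ hm2.2.2)
    have hss : F.filter (fun m' => y ∈ m') ⊂ F := by
      rw [Finset.ssubset_iff_of_subset (Finset.filter_subset _ _)]
      exact ⟨f z w, hm2.1, by simp [hym2]⟩
    exact Finset.card_lt_card hss
  have hFne : F.Nonempty := by
    obtain ⟨y, hy⟩ := Finset.card_pos.mp (by omega : 0 < V.card)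
    obtain ⟨z, hz, hzy⟩ := Finset.exists_mem_ne (by omega : 1 < V.card) y
    exact ⟨f y z, (hf y hy z hz (Ne.symm hzy)).1⟩
  have hk1 : 1 ≤ F.card := Finset.card_pos.mpr hFne
  -- cardinality facts
  have hsd : ∀ m ∈ F, (V \ m).card = n - (m ∩ V).card := by
    intro m hm
    have h1 := Finset.card_sdiff_add_card_inter V m
    rw [Finset.inter_comm, hV] at h1
    omega
  -- first sum equals 1
  have h1 : ∑ m ∈ F, ∑ _y ∈ V \ m, (1 : ℚ) / (F.card * ((n : ℚ) - (m ∩ V).card)) = 1 := by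
    have hterm : ∀ m ∈ F, ∑ _y ∈ V \ m, (1 : ℚ) / (F.card * ((n : ℚ) - (m ∩ V).card))
        = 1 / F.card := by
      intro m hm
      rw [Finset.sum_const, nsmul_eq_mul, hsd m hm,
        Nat.cast_sub (by have := hsizen m hm; omega)]
      have hne : (n : ℚ) - (m ∩ V).card ≠ 0 := by
        have h := hsizen m hm
        have han : (m ∩ V).card < n := by omega
        have : ((m ∩ V).card : ℚ) < n := by exact_mod_cast han
        linarith
      have hkne : (F.card : ℚ) ≠ 0 := by positivity
      field_simp
    rw [Finset.sum_congr rfl hterm, Finset.sum_const, nsmul_eq_mul]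
    have hkne : (F.card : ℚ) ≠ 0 := by positivity
    field_simp
  -- second sum equals 1
  have h2 : ∑ y ∈ V, ∑ _m ∈ F.filter (fun m => y ∉ m),
      (1 : ℚ) / (n * ((F.card : ℚ) - (F.filter (fun m' => y ∈ m')).card)) = 1 := by
    have hterm : ∀ y ∈ V, ∑ _m ∈ F.filter (fun m => y ∉ m),
        (1 : ℚ) / (n * ((F.card : ℚ) - (F.filter (fun m' => y ∈ m')).card))
        = 1 / n := by
      intro y hy
      have hcnt : (F.filter (fun m => y ∉ m)).card
          = F.card - (F.filter (fun m' => y ∈ m')).card := by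
        have := Finset.card_filter_add_card_filter_not (s := F)
          (p := fun m => y ∈ m)
        omega
      rw [Finset.sum_const, nsmul_eq_mul, hcnt,
        Nat.cast_sub (le_of_lt (fact_rk y hy))]
      have hne : (F.card : ℚ) - (F.filter (fun m' => y ∈ m')).card ≠ 0 := by
        have h := fact_rk y hy
        have : ((F.filter (fun m' => y ∈ m')).card : ℚ) < F.card := by exact_mod_cast h
        linarith
      have hnne : (n : ℚ) ≠ 0 := by positivity
      field_simp
    rw [Finset.sum_congr rfl hterm, Finset.sum_const, nsmul_eq_mul, hV]
    have hnne : (n : ℚ) ≠ 0 := by positivity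
    field_simp
  -- swap order in the second sum
  have hswap : ∑ y ∈ V, ∑ _m ∈ F.filter (fun m => y ∉ m),
      (1 : ℚ) / (n * ((F.card : ℚ) - (F.filter (fun m' => y ∈ m')).card))
      = ∑ m ∈ F, ∑ y ∈ V \ m,
        (1 : ℚ) / (n * ((F.card : ℚ) - (F.filter (fun m' => y ∈ m')).card)) := by
    have e1 : ∀ y ∈ V, ∑ _m ∈ F.filter (fun m => y ∉ m),
        (1 : ℚ) / (n * ((F.card : ℚ) - (F.filter (fun m' => y ∈ m')).card))
        = ∑ m ∈ F, if y ∉ m then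
          (1 : ℚ) / (n * ((F.card : ℚ) - (F.filter (fun m' => y ∈ m')).card)) else 0 := by
      intro y _
      rw [Finset.sum_filter]
    rw [Finset.sum_congr rfl e1, Finset.sum_comm]
    apply Finset.sum_congr rfl
    intro m _
    rw [Finset.sdiff_eq_filter, Finset.sum_filter]
  -- strict comparison
  have h3 : ∑ m ∈ F, ∑ _y ∈ V \ m, (1 : ℚ) / (F.card * ((n : ℚ) - (m ∩ V).card))
      < ∑ m ∈ F, ∑ y ∈ V \ m,
        (1 : ℚ) / (n * ((F.card : ℚ) - (F.filter (fun m' => y ∈ m')).card)) := by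
    apply Finset.sum_lt_sum_of_nonempty hFne
    intro m hm
    apply Finset.sum_lt_sum_of_nonempty (hVm m hm)
    intro y hy
    rw [Finset.mem_sdiff] at hy
    have har := fact_r y hy.1 m hm hy.2
    have hrk := fact_rk y hy.1
    have hrpos : 1 ≤ (F.filter (fun m' => y ∈ m')).card := by
      obtain ⟨z, hz, hzy⟩ := Finset.exists_mem_ne (by omega : 1 < V.card) y
      have hfz := hf y hy.1 z hz (Ne.symm hzy)
      have hmem : f y z ∈ F.filter (fun m' => y ∈ m') :=
        Finset.mem_filter.mpr ⟨hfz.1, hfz.2.1⟩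
      exact Finset.card_pos.mpr ⟨f y z, hmem⟩
    have han := hsizen m hm
    have c1 : (0 : ℚ) < (n : ℚ) * ((F.card : ℚ) - (F.filter (fun m' => y ∈ m')).card) := by
      have q1 : ((F.filter (fun m' => y ∈ m')).card : ℚ) < F.card := by exact_mod_cast hrk
      have q2 : (0 : ℚ) < n := by positivity
      nlinarith
    have c2 : (n : ℚ) * ((F.card : ℚ) - (F.filter (fun m' => y ∈ m')).card)
        < (F.card : ℚ) * ((n : ℚ) - (m ∩ V).card) := by
      have q1 : ((m ∩ V).card : ℚ) ≤ (F.filter (fun m' => y ∈ m')).card := by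
        exact_mod_cast har
      have q2 : (F.card : ℚ) < n := by exact_mod_cast hk
      have q3 : (1 : ℚ) ≤ (F.filter (fun m' => y ∈ m')).card := by exact_mod_cast hrpos
      have q4 : (1 : ℚ) ≤ F.card := by exact_mod_cast hk1
      nlinarith
    exact one_div_lt_one_div_of_lt c1 c2
  rw [h1, hswap.symm, h2] at h3
  exact lt_irrefl 1 h3



/-- An incidence system on an ambient type `α`: a finite point set together with a
finite set of lines, each line being a subset of the point set. -/
structure IncSys (α : Type) [DecidableEq α] where
  pts : Finset α
  lines : Finset (Finset α)
  line_sub : ∀ ℓ ∈ lines, ℓ ⊆ pts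

/-- A `p`-admissible incidence system: `p² + p + 1` points, every line has `p + 1` points,
and any two distinct lines meet in exactly one point. -/
def IsAdmissible {α : Type} [DecidableEq α] (p : ℕ) (Y : IncSys α) : Prop :=
  Y.pts.card = p ^ 2 + p + 1 ∧ (∀ ℓ ∈ Y.lines, ℓ.card = p + 1) ∧
    ∀ ℓ₁ ∈ Y.lines, ∀ ℓ₂ ∈ Y.lines, ℓ₁ ≠ ℓ₂ → (ℓ₁ ∩ ℓ₂).card = 1

/-- A projective plane of order `p`, given as an incidence system: `p² + p + 1` points and
lines, every line has `p + 1` points, every point lies on `p + 1` lines, any two distinct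
points lie on a unique common line, and any two distinct lines meet in a unique point. -/
def IsProjPlaneOfOrder {α : Type} [DecidableEq α] (p : ℕ) (Y : IncSys α) : Prop :=
  Y.pts.card = p ^ 2 + p + 1 ∧ Y.lines.card = p ^ 2 + p + 1 ∧
    (∀ ℓ ∈ Y.lines, ℓ.card = p + 1) ∧
    (∀ x ∈ Y.pts, (Y.lines.filter (fun ℓ => x ∈ ℓ)).card = p + 1) ∧
    (∀ x ∈ Y.pts, ∀ y ∈ Y.pts, x ≠ y → ∃! ℓ, ℓ ∈ Y.lines ∧ x ∈ ℓ ∧ y ∈ ℓ) ∧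
    (∀ ℓ₁ ∈ Y.lines, ∀ ℓ₂ ∈ Y.lines, ℓ₁ ≠ ℓ₂ → ∃! x, x ∈ ℓ₁ ∧ x ∈ ℓ₂)

/-- Lemma 3.3: two projective planes of the same prime order `p` sharing at least
`p² + 1` lines (as sets of points) are equal: they have the same point set and the same
set of lines. -/
theorem proj_planes_sharing_many_lines_eq {α : Type} [DecidableEq α] (p : ℕ)
    (hp : p.Prime) (π σ : IncSys α)
    (hπ : IsProjPlaneOfOrder p π) (hσ : IsProjPlaneOfOrder p σ)
    (hshare : p ^ 2 + 1 ≤ (π.lines ∩ σ.lines).card) :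
    π.pts = σ.pts ∧ π.lines = σ.lines := by
  classical
  obtain ⟨hπp, hπl, hπc, hπx, hπuu, hπli⟩ := hπ
  obtain ⟨hσp, hσl, hσc, hσx, hσuu, hσli⟩ := hσ
  have hp2 : 2 ≤ p := hp.two_le
  have hLπ : π.lines ∩ σ.lines ⊆ π.lines := Finset.inter_subset_left
  have hLσ : π.lines ∩ σ.lines ⊆ σ.lines := Finset.inter_subset_right
  have hLcard : (π.lines ∩ σ.lines).card ≤ p ^ 2 + p + 1 := by
    calc (π.lines ∩ σ.lines).card ≤ π.lines.card := Finset.card_le_card hLπ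
    _ = p ^ 2 + p + 1 := hπl
  have hdπ : (π.lines \ σ.lines).card ≤ p := by
    have h1 := Finset.card_sdiff_add_card_inter π.lines σ.lines
    rw [hπl] at h1
    omega
  have hdσ : (σ.lines \ π.lines).card ≤ p := by
    have h1 := Finset.card_sdiff_add_card_inter σ.lines π.lines
    rw [hσl, Finset.inter_comm] at h1
    omega
  -- Step A: the point sets are equal
  have hptsub : ∀ (τ υ : IncSys α), τ.lines.card = p ^ 2 + p + 1 →
      (∀ x ∈ τ.pts, (τ.lines.filter (fun ℓ => x ∈ ℓ)).card = p + 1) →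
      (τ.lines \ υ.lines).card ≤ p → τ.pts ⊆ υ.pts := by
    intro τ υ hτl hτx hd x hx
    by_cases hex : ∃ ℓ ∈ τ.lines, x ∈ ℓ ∧ ℓ ∈ υ.lines
    · obtain ⟨ℓ, _, hxℓ, hℓυ⟩ := hex
      exact υ.line_sub ℓ hℓυ hxℓ
    · push_neg at hex
      have hsub : τ.lines.filter (fun ℓ => x ∈ ℓ) ⊆ τ.lines \ υ.lines := by
        intro ℓ hℓ
        rw [Finset.mem_filter] at hℓ
        exact Finset.mem_sdiff.mpr ⟨hℓ.1, hex ℓ hℓ.1 hℓ.2⟩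
      have := Finset.card_le_card hsub
      rw [hτx x hx] at this
      omega
  have hpts : π.pts = σ.pts :=
    Finset.Subset.antisymm (hptsub π σ hπl hπx hdπ) (hptsub σ π hσl hσx hdσ)
  refine ⟨hpts, ?_⟩
  -- Step B: the line sets are equal
  have hsub : π.lines ⊆ σ.lines := by
    intro ℓ hℓ
    by_contra hℓσ
    -- the set of σ-lines meeting ℓ in at least two points
    set F : Finset (Finset α) := σ.lines.filter (fun m => 2 ≤ (m ∩ ℓ).card) with hFdef
    have hFσ : F ⊆ σ.lines := Finset.filter_subset _ _
    have hFsub : F ⊆ σ.lines \ π.lines := by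
      intro m hm
      rw [hFdef, Finset.mem_filter] at hm
      refine Finset.mem_sdiff.mpr ⟨hm.1, fun hmπ => ?_⟩
      have hmℓ : m ≠ ℓ := fun h => hℓσ (h ▸ hm.1)
      obtain ⟨x, hx, hxu⟩ := hπli m hmπ ℓ hℓ hmℓ
      have hle : (m ∩ ℓ).card ≤ 1 := by
        apply Finset.card_le_one.mpr
        intro a ha b hb
        rw [Finset.mem_inter] at ha hb
        rw [hxu a ha, hxu b hb]
      omega
    have hFcard : F.card ≤ p :=
      le_trans (Finset.card_le_card hFsub) hdσ
    have hℓpts : ℓ ⊆ σ.pts := by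
      rw [← hpts]; exact π.line_sub ℓ hℓ
    -- apply the de Bruijn–Erdős style lemma with V = ℓ, n = p + 1
    apply dbe_aux ℓ F (p + 1) (by omega) (hπc ℓ hℓ)
    · -- coverage: any two points of ℓ lie on a common line of F
      intro y hy z hz hyz
      obtain ⟨m, ⟨hmσ, hym, hzm⟩, _⟩ := hσuu y (hℓpts hy) z (hℓpts hz) hyz
      refine ⟨m, ?_, hym, hzm⟩
      rw [hFdef, Finset.mem_filter]
      refine ⟨hmσ, ?_⟩
      rw [Nat.succ_le_iff, Finset.one_lt_card]
      exact ⟨y, Finset.mem_inter.mpr ⟨hym, hy⟩, z, Finset.mem_inter.mpr ⟨hzm, hz⟩, hyz⟩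
    · -- two distinct lines of F meet ℓ in at most one common point
      intro m₁ hm₁ m₂ hm₂ hne
      obtain ⟨x, hx, hxu⟩ := hσli m₁ (hFσ hm₁) m₂ (hFσ hm₂) hne
      apply Finset.card_le_one.mpr
      intro a ha b hb
      simp only [Finset.mem_inter] at ha hb
      rw [hxu a ⟨ha.1.1, ha.1.2⟩, hxu b ⟨hb.1.1, hb.1.2⟩]
    · -- every line of F meets ℓ in at most p points
      intro m hm
      simp only [Nat.add_sub_cancel]
      by_contra hgt
      push_neg at hgt
      have hc1 : (m ∩ ℓ).card ≤ p + 1 := by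
        calc (m ∩ ℓ).card ≤ ℓ.card := Finset.card_le_card Finset.inter_subset_right
        _ = p + 1 := hπc ℓ hℓ
      have hceq : (m ∩ ℓ).card = p + 1 := by omega
      have he1 : m ∩ ℓ = ℓ := Finset.eq_of_subset_of_card_le Finset.inter_subset_right
        (by rw [hπc ℓ hℓ, hceq])
      have he2 : m ∩ ℓ = m := Finset.eq_of_subset_of_card_le Finset.inter_subset_left
        (by rw [hσc m (hFσ hm), hceq])
      have hmeq : m = ℓ := he2.symm.trans he1
      exact hℓσ (hmeq ▸ hFσ hm)
    · omega
  exact Finset.eq_of_subset_of_card_le hsub (by rw [hσl, hπl])
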